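/- Let α, β, γ ∈ ℂ be pairwise distinct, let p(x,y) := (x−αy)(x−βy)(x−γy), and let h := ⟨p,p⟩_2, a binary quadratic. Then h ≠ 0 and h lies in each of the three 2-dimensional subspaces of the space of binary quadratics: span_ℂ{(x−αy)(x−βy), (x−γy)^2}, span_ℂ{(x−αy)(x−γy), (x−βy)^2}, and span_ℂ{(x−βy)(x−γy), (x−αy)^2}. Consequently, in the projective plane ℙ(Sym^2(ℂ^2)), the three lines joining each vertex of the triangle with vertices [(x−αy)(x−βy)], [(x−αy)(x−γy)], [(x−βy)(x−γy)] to the opposite tangency point [(x−γy)^2], [(x−βy)^2], [(x−αy)^2] respectively all pass through the single point [h]: the Gergonne point is the image of p under the quadratic map Q(p) = ⟨p,p⟩_2. -/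
import Mathlib


open MvPolynomial

/-- Partial derivative with respect to the first variable `x = X 0`. -/
noncomputable def dX : MvPolynomial (Fin 2) ℂ → MvPolynomial (Fin 2) ℂ :=
  fun f => MvPolynomial.pderiv (0 : Fin 2) f

/-- Partial derivative with respect to the second variable `y = X 1`. -/
noncomputable def dY : MvPolynomial (Fin 2) ℂ → MvPolynomial (Fin 2) ℂ :=
  fun f => MvPolynomial.pderiv (1 : Fin 2) f

/-- The `k`-th transvectant
`⟨φ,ψ⟩_k = Σ_{j=0}^{k} (−1)^j (k choose j) (∂^k φ/∂x^{k−j}∂y^j)·(∂^k ψ/∂x^j ∂y^{k−j})`. -/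
noncomputable def transvectant (k : ℕ) (φ ψ : MvPolynomial (Fin 2) ℂ) :
    MvPolynomial (Fin 2) ℂ :=
  ∑ j ∈ Finset.range (k + 1),
    ((-1 : ℂ) ^ j * (k.choose j : ℂ)) •
      (dX^[k - j] (dY^[j] φ) * dX^[j] (dY^[k - j] ψ))


lemma pderiv_ofNat (i : Fin 2) (n : ℕ) [n.AtLeastTwo] :
    pderiv i (no_index (OfNat.ofNat n) : MvPolynomial (Fin 2) ℂ) = 0 := by
  rw [← map_ofNat (C : ℂ →+* MvPolynomial (Fin 2) ℂ) n, pderiv_C]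

/-- The explicit cubic. -/
noncomputable def cub (a b c : ℂ) : MvPolynomial (Fin 2) ℂ :=
  X 0 ^ 3 - C a * X 0 ^ 2 * X 1 + C b * X 0 * X 1 ^ 2 - C c * X 1 ^ 3

lemma dX_cub (a b c : ℂ) :
    dX (cub a b c) = C 3 * X 0 ^ 2 - C (2*a) * X 0 * X 1 + C b * X 1 ^ 2 := by
  simp only [dX, cub, map_sub, map_add, map_mul, Derivation.leibniz, Derivation.leibniz_pow,
    pderiv_X, pderiv_C, smul_eq_mul, map_ofNat, pderiv_ofNat, Pi.single_eq_same, Pi.single_eq_of_ne (by decide : (1:Fin 2) ≠ 0)]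
  ring

lemma dY_cub (a b c : ℂ) :
    dY (cub a b c) = - C a * X 0 ^ 2 + C (2*b) * X 0 * X 1 - C (3*c) * X 1 ^ 2 := by
  simp only [dY, cub, map_sub, map_add, map_mul, Derivation.leibniz, Derivation.leibniz_pow,
    pderiv_X, pderiv_C, smul_eq_mul, map_ofNat, pderiv_ofNat, Pi.single_eq_same, Pi.single_eq_of_ne (by decide : (0:Fin 2) ≠ 1)]
  ring

lemma dXX_cub (a b c : ℂ) : dX (dX (cub a b c)) = C 6 * X 0 - C (2*a) * X 1 := by
  rw [dX_cub]
  simp only [dX, map_sub, map_add, map_mul, Derivation.leibniz, Derivation.leibniz_pow,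
    pderiv_X, pderiv_C, smul_eq_mul, map_ofNat, pderiv_ofNat, Pi.single_eq_same, Pi.single_eq_of_ne (by decide : (1:Fin 2) ≠ 0)]
  ring

lemma dXY_cub (a b c : ℂ) : dX (dY (cub a b c)) = - C (2*a) * X 0 + C (2*b) * X 1 := by
  rw [dY_cub]
  simp only [dX, map_sub, map_add, map_mul, map_neg, Derivation.leibniz, Derivation.leibniz_pow,
    pderiv_X, pderiv_C, smul_eq_mul, map_ofNat, pderiv_ofNat, Pi.single_eq_same, Pi.single_eq_of_ne (by decide : (1:Fin 2) ≠ 0)]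
  ring

lemma dYX_cub (a b c : ℂ) : dY (dX (cub a b c)) = - C (2*a) * X 0 + C (2*b) * X 1 := by
  rw [dX_cub]
  simp only [dY, map_sub, map_add, map_mul, Derivation.leibniz, Derivation.leibniz_pow,
    pderiv_X, pderiv_C, smul_eq_mul, map_ofNat, pderiv_ofNat, Pi.single_eq_same, Pi.single_eq_of_ne (by decide : (0:Fin 2) ≠ 1)]
  ring

lemma dYY_cub (a b c : ℂ) : dY (dY (cub a b c)) = C (2*b) * X 0 - C (6*c) * X 1 := by
  rw [dY_cub]
  simp only [dY, map_sub, map_add, map_mul, map_neg, Derivation.leibniz, Derivation.leibniz_pow,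
    pderiv_X, pderiv_C, smul_eq_mul, map_ofNat, pderiv_ofNat, Pi.single_eq_same, Pi.single_eq_of_ne (by decide : (0:Fin 2) ≠ 1)]
  ring

lemma trans_cub (a b c : ℂ) :
    transvectant 2 (cub a b c) (cub a b c) =
      C (24*b - 8*a^2) * X 0 ^ 2 + C (8*a*b - 72*c) * X 0 * X 1
        + C (24*a*c - 8*b^2) * X 1 ^ 2 := by
  have : transvectant 2 (cub a b c) (cub a b c) =
      (1 : ℂ) • (dX (dX (cub a b c)) * dY (dY (cub a b c)))
      + (-2 : ℂ) • (dX (dY (cub a b c)) * dX (dY (cub a b c)))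
      + (1 : ℂ) • (dY (dY (cub a b c)) * dX (dX (cub a b c))) := by
    simp [transvectant, Finset.sum_range_succ, Function.iterate_succ_apply',
      Function.iterate_zero_apply]
  rw [this, dXX_cub, dXY_cub, dYY_cub]
  simp only [smul_eq_C_mul, map_one, map_neg, map_ofNat, map_sub, map_mul, map_add, map_pow]
  ring

lemma cub_eq (α β γ : ℂ) :
    (X 0 - C α * X 1) * (X 0 - C β * X 1) * (X 0 - C γ * X 1) =
      cub (α+β+γ) (α*β+α*γ+β*γ) (α*β*γ) := by
  simp only [cub, map_add, map_mul]
  ring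

lemma key (α β γ : ℂ) :
    transvectant 2 ((X 0 - C α * X 1) * (X 0 - C β * X 1) * (X 0 - C γ * X 1))
      ((X 0 - C α * X 1) * (X 0 - C β * X 1) * (X 0 - C γ * X 1)) =
    (-8*(α-γ)*(β-γ)) • ((X 0 - C α * X 1) * (X 0 - C β * X 1)) +
      (-8*(α-β)^2) • (X 0 - C γ * X 1) ^ 2 := by
  rw [cub_eq, trans_cub]
  simp only [smul_eq_C_mul, map_sub, map_mul, map_add, map_pow, map_neg, map_ofNat]
  ring

/-- The Gergonne point: for pairwise distinct `α, β, γ` and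
`p = (x−αy)(x−βy)(x−γy)`, the quadratic `h = ⟨p,p⟩₂` is nonzero and lies in each of the
three 2-dimensional subspaces `span{(x−αy)(x−βy), (x−γy)²}`,
`span{(x−αy)(x−γy), (x−βy)²}` and `span{(x−βy)(x−γy), (x−αy)²}`. -/
theorem gergonne_point
    (α β γ : ℂ) (hαβ : α ≠ β) (hαγ : α ≠ γ) (hβγ : β ≠ γ)
    (p h : MvPolynomial (Fin 2) ℂ)
    (hpdef : p = (X 0 - C α * X 1) * (X 0 - C β * X 1) * (X 0 - C γ * X 1))
    (hhdef : h = transvectant 2 p p) :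
    h ≠ 0 ∧
    h ∈ Submodule.span ℂ
        ({(X 0 - C α * X 1) * (X 0 - C β * X 1), (X 0 - C γ * X 1) ^ 2} :
          Set (MvPolynomial (Fin 2) ℂ)) ∧
    h ∈ Submodule.span ℂ
        ({(X 0 - C α * X 1) * (X 0 - C γ * X 1), (X 0 - C β * X 1) ^ 2} :
          Set (MvPolynomial (Fin 2) ℂ)) ∧
    h ∈ Submodule.span ℂ
        ({(X 0 - C β * X 1) * (X 0 - C γ * X 1), (X 0 - C α * X 1) ^ 2} :
          Set (MvPolynomial (Fin 2) ℂ)) := by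
  have h1 : h = (-8*(α-γ)*(β-γ)) • ((X 0 - C α * X 1) * (X 0 - C β * X 1)) +
      (-8*(α-β)^2) • (X 0 - C γ * X 1) ^ 2 := by
    rw [hhdef, hpdef]; exact key α β γ
  have h2 : h = (-8*(α-β)*(γ-β)) • ((X 0 - C α * X 1) * (X 0 - C γ * X 1)) +
      (-8*(α-γ)^2) • (X 0 - C β * X 1) ^ 2 := by
    rw [hhdef, hpdef]
    have e : ((X 0 - C α * X 1) * (X 0 - C β * X 1) * (X 0 - C γ * X 1) :
          MvPolynomial (Fin 2) ℂ)
        = (X 0 - C α * X 1) * (X 0 - C γ * X 1) * (X 0 - C β * X 1) := by ring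
    rw [e]; exact key α γ β
  have h3 : h = (-8*(β-α)*(γ-α)) • ((X 0 - C β * X 1) * (X 0 - C γ * X 1)) +
      (-8*(β-γ)^2) • (X 0 - C α * X 1) ^ 2 := by
    rw [hhdef, hpdef]
    have e : ((X 0 - C α * X 1) * (X 0 - C β * X 1) * (X 0 - C γ * X 1) :
          MvPolynomial (Fin 2) ℂ)
        = (X 0 - C β * X 1) * (X 0 - C γ * X 1) * (X 0 - C α * X 1) := by ring
    rw [e]; exact key β γ α
  refine ⟨?_, ?_, ?_, ?_⟩
  · intro h0
    have hev := congrArg (eval (fun i : Fin 2 => if i = 0 then γ else 1)) h1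
    rw [h0] at hev
    simp only [smul_eq_C_mul, map_add, map_mul, map_sub, map_pow, eval_X, eval_C, map_zero,
      map_neg, map_ofNat, if_pos, if_neg, Fin.isValue, reduceIte, one_ne_zero] at hev
    have hsq : ((α - γ) * (β - γ)) ^ 2 = 0 := by linear_combination ((1:ℂ)/8) * hev
    rcases mul_eq_zero.mp (pow_eq_zero_iff two_ne_zero |>.mp hsq) with t | t
    · exact hαγ (sub_eq_zero.mp t)
    · exact hβγ (sub_eq_zero.mp t)
  · exact h1 ▸ Submodule.add_mem _
      (Submodule.smul_mem _ _ (Submodule.subset_span (by simp)))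
      (Submodule.smul_mem _ _ (Submodule.subset_span (by simp)))
  · exact h2 ▸ Submodule.add_mem _
      (Submodule.smul_mem _ _ (Submodule.subset_span (by simp)))
      (Submodule.smul_mem _ _ (Submodule.subset_span (by simp)))
  · exact h3 ▸ Submodule.add_mem _
      (Submodule.smul_mem _ _ (Submodule.subset_span (by simp)))
      (Submodule.smul_mem _ _ (Submodule.subset_span (by simp)))
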